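/- Let K = ℚ(ε) and let P = K[t^{α,p} : α ∈ {1,2}, p ∈ ℕ]. Then the operators L_{-1} and L_0 defined below satisfy the Virasoro commutation relation [L_{-1}, L_0] = −L_{-1} as K-linear endomorphisms of P. -/

import Mathlib

/-!
Virasoro operators of the extended Toda hierarchy acting on the polynomial
algebra `P = K[t^{α,p}]`, `K = ℚ(ε)`.  Variables are indexed by
`(a, p) : Fin 2 × ℕ` where `a = 0` corresponds to `α = 1` and `a = 1` to `α = 2`.
-/

open MvPolynomial

noncomputable section ExtendedToda

abbrev K : Type := RatFunc ℚ

abbrev P : Type := MvPolynomial (Fin 2 × ℕ) K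

/-- The indeterminate `ε`. -/
def eps : K := RatFunc.X

/-- The coupling variable `t^{α,p}` (with `α = 1` encoded as `0`, `α = 2` as `1`). -/
def t (a : Fin 2) (p : ℕ) : P := X (a, p)

/-- The partial derivative `∂/∂t^{α,p}`. -/
def pd (a : Fin 2) (p : ℕ) (q : P) : P := pderiv (a, p) q

/-- `L_{-1} = Σ_{k≥1} Σ_α t^{α,k} ∂/∂t^{α,k−1} + ε^{−2} t^{1,0} t^{2,0}`
(the sum over `k ≥ 1` is written with `k` shifted by one). -/
def Lneg1 (q : P) : P :=
  (∑ᶠ k : ℕ, (t 0 (k + 1) * pd 0 k q + t 1 (k + 1) * pd 1 k q))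
    + eps⁻¹ ^ 2 • (t 0 0 * t 1 0 * q)

/-- `L_0 = Σ_{k≥1} k (t^{1,k} ∂_{1,k} + t^{2,k−1} ∂_{2,k−1}) + 2 Σ_{k≥1} t^{1,k} ∂_{2,k−1}
+ ε^{−2} (t^{1,0})²` (sums written with `k` shifted by one). -/
def L0 (q : P) : P :=
  (∑ᶠ k : ℕ, (((k : K) + 1) • (t 0 (k + 1) * pd 0 (k + 1) q + t 1 k * pd 1 k q)
      + (2 : K) • (t 0 (k + 1) * pd 1 k q)))
    + eps⁻¹ ^ 2 • (t 0 0 * t 0 0 * q)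

lemma pd_X_ne {a b : Fin 2} {k m : ℕ} (h : k ≠ m) : pd a k (X (b, m) : P) = 0 :=
  pderiv_X_of_ne (fun hh => h ((congrArg Prod.snd hh).symm))

lemma pd_supp (a : Fin 2) (q : P) : (Function.support fun k => pd a k q).Finite := by
  apply Set.Finite.subset (q.vars.image Prod.snd).finite_toSet
  intro k hk
  simp only [Function.mem_support] at hk
  simp only [Finset.coe_image, Set.mem_image, Finset.mem_coe]
  refine ⟨(a, k), ?_, rfl⟩
  by_contra h
  exact hk (pderiv_eq_zero_of_notMem_vars h)

lemma supp_fin {F : ℕ → P} (q : P)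
    (h : ∀ k, pd 0 k q = 0 → pd 1 k q = 0 → F k = 0) :
    (Function.support F).Finite := by
  apply Set.Finite.subset ((pd_supp 0 q).union (pd_supp 1 q))
  intro k hk
  by_contra hc
  simp only [Set.mem_union, Function.mem_support, not_or, not_not] at hc
  exact hk (h k hc.1 hc.2)

lemma deriv_apply (D : Derivation K P P) (q : P) :
    D q = ∑ᶠ k : ℕ, (pd 0 k q * D (t 0 k) + pd 1 k q * D (t 1 k)) := by
  induction q using MvPolynomial.induction_on with
  | C c =>
      have h1 : ∀ k : ℕ, pd 0 k (C c : P) * D (t 0 k) + pd 1 k (C c : P) * D (t 1 k) = 0 :=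
        fun k => by simp [pd, pderiv_C]
      rw [finsum_congr h1, finsum_zero, MvPolynomial.C_eq_smul_one, D.map_smul,
        D.map_one_eq_zero, smul_zero]
  | add p r hp hr =>
      have key : ∀ k : ℕ, pd 0 k (p + r) * D (t 0 k) + pd 1 k (p + r) * D (t 1 k)
          = (pd 0 k p * D (t 0 k) + pd 1 k p * D (t 1 k))
            + (pd 0 k r * D (t 0 k) + pd 1 k r * D (t 1 k)) := fun k => by
        simp only [pd, map_add]; ring
      have hfp : (Function.support fun k => pd 0 k p * D (t 0 k) + pd 1 k p * D (t 1 k)).Finite :=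
        supp_fin p (fun k h0 h1 => by simp [h0, h1])
      have hfr : (Function.support fun k => pd 0 k r * D (t 0 k) + pd 1 k r * D (t 1 k)).Finite :=
        supp_fin r (fun k h0 h1 => by simp [h0, h1])
      rw [map_add, finsum_congr key, finsum_add_distrib hfp hfr, ← hp, ← hr]
  | mul_X p i hp =>
      obtain ⟨b, m⟩ := i
      have key : ∀ k : ℕ, pd 0 k (p * X (b, m)) * D (t 0 k) + pd 1 k (p * X (b, m)) * D (t 1 k)
          = X (b, m) * (pd 0 k p * D (t 0 k) + pd 1 k p * D (t 1 k))
            + (p * pd 0 k (X (b, m)) * D (t 0 k) + p * pd 1 k (X (b, m)) * D (t 1 k)) := fun k => by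
        simp only [pd, pderiv_mul]; ring
      have hfp : (Function.support fun k => pd 0 k p * D (t 0 k) + pd 1 k p * D (t 1 k)).Finite :=
        supp_fin p (fun k h0 h1 => by simp [h0, h1])
      have hf1 : (Function.support fun k =>
          X (b, m) * (pd 0 k p * D (t 0 k) + pd 1 k p * D (t 1 k))).Finite :=
        supp_fin p (fun k h0 h1 => by simp [h0, h1])
      have hf2 : (Function.support fun k =>
          p * pd 0 k (X (b, m)) * D (t 0 k) + p * pd 1 k (X (b, m)) * D (t 1 k)).Finite := by
        apply Set.Finite.subset (Set.finite_singleton m)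
        intro k hk
        simp only [Function.mem_support] at hk
        simp only [Set.mem_singleton_iff]
        by_contra hc
        exact hk (by simp [pd_X_ne hc])
      have hsingle : (∑ᶠ k : ℕ,
          (p * pd 0 k (X (b, m)) * D (t 0 k) + p * pd 1 k (X (b, m)) * D (t 1 k)))
          = p * D (X (b, m)) := by
        rw [finsum_eq_single _ m (fun k hk => by simp [pd_X_ne hk])]
        fin_cases b
        · have h0 : pd 0 m (X ((0 : Fin 2), m) : P) = 1 := pderiv_X_self _
          have h1 : pd 1 m (X ((0 : Fin 2), m) : P) = 0 := pderiv_X_of_ne (by simp)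
          simp [h0, h1, t]
        · have h0 : pd 0 m (X ((1 : Fin 2), m) : P) = 0 := pderiv_X_of_ne (by simp)
          have h1 : pd 1 m (X ((1 : Fin 2), m) : P) = 1 := pderiv_X_self _
          simp [h0, h1, t]
      rw [D.leibniz, finsum_congr key, finsum_add_distrib hf1 hf2, hsingle,
        ← mul_finsum _ _, ← hp, smul_eq_mul, smul_eq_mul]
      ring


lemma finsum_shift (f : ℕ → P) (hf : (Function.support f).Finite) (h0 : f 0 = 0) :
    ∑ᶠ k : ℕ, f k = ∑ᶠ k : ℕ, f (k + 1) := by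
  set N : ℕ := hf.toFinset.sup id + 1 with hN
  have hsub : Function.support f ⊆ ↑(Finset.range (N + 1)) := by
    intro k hk
    simp only [Finset.coe_range, Set.mem_Iio]
    have : k ≤ hf.toFinset.sup id := Finset.le_sup (f := id) (hf.mem_toFinset.2 hk)
    omega
  have hsub' : (Function.support fun k => f (k + 1)) ⊆ ↑(Finset.range N) := by
    intro k hk
    simp only [Function.mem_support] at hk
    simp only [Finset.coe_range, Set.mem_Iio]
    have : k + 1 ≤ hf.toFinset.sup id := Finset.le_sup (f := id) (hf.mem_toFinset.2 hk)
    omega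
  rw [finsum_eq_sum_of_support_subset f hsub,
    finsum_eq_sum_of_support_subset _ hsub', Finset.sum_range_succ', h0, add_zero]

def D1 : Derivation K P P := mkDerivation K fun i => X (i.1, i.2 + 1)

def D2 : Derivation K P P := mkDerivation K fun i =>
  if i.1 = 0 then (i.2 : K) • X i
  else ((i.2 : K) + 1) • X i + (2 : K) • X (0, i.2 + 1)

lemma D1_X (a : Fin 2) (p : ℕ) : D1 (X (a, p) : P) = X (a, p + 1) :=
  mkDerivation_X _ _ _

lemma D2_X0 (p : ℕ) : D2 (X ((0 : Fin 2), p) : P) = (p : K) • X (0, p) := by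
  rw [D2, mkDerivation_X]; simp

lemma D2_X1 (p : ℕ) : D2 (X ((1 : Fin 2), p) : P)
    = ((p : K) + 1) • X (1, p) + (2 : K) • X (0, p + 1) := by
  rw [D2, mkDerivation_X]; norm_num

lemma LD1 (q : P) : Lneg1 q = D1 q + eps⁻¹ ^ 2 • (t 0 0 * t 1 0) * q := by
  rw [Lneg1, deriv_apply D1 q, smul_mul_assoc, mul_assoc]
  refine congrArg (· + _) ?_
  refine finsum_congr fun k => ?_
  rw [t, t, t, t, D1_X, D1_X]
  ring

lemma LD2 (q : P) : L0 q = D2 q + eps⁻¹ ^ 2 • (t 0 0 * t 0 0) * q := by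
  rw [L0, deriv_apply D2 q, smul_mul_assoc, mul_assoc]
  congr 1
  set g0 : ℕ → P := fun k => (k : K) • (t 0 k * pd 0 k q) with hg0
  set g1 : ℕ → P := fun k =>
    ((k : K) + 1) • (t 1 k * pd 1 k q) + (2 : K) • (t 0 (k + 1) * pd 1 k q) with hg1
  have hfg0 : (Function.support g0).Finite :=
    supp_fin q (fun k h0 h1 => by simp [hg0, h0])
  have hfg0' : (Function.support fun k => g0 (k + 1)).Finite :=
    Set.Finite.preimage (fun a _ b _ h => by omega) hfg0
  have hfg1 : (Function.support g1).Finite :=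
    supp_fin q (fun k h0 h1 => by simp [hg1, h1])
  have hA : ∀ k : ℕ, ((k : K) + 1) • (t 0 (k + 1) * pd 0 (k + 1) q + t 1 k * pd 1 k q)
      + (2 : K) • (t 0 (k + 1) * pd 1 k q) = g0 (k + 1) + g1 k := fun k => by
    rw [hg0, hg1]
    push_cast
    rw [smul_add]
    ring_nf
  have hB : ∀ k : ℕ, pd 0 k q * D2 (t 0 k) + pd 1 k q * D2 (t 1 k) = g0 k + g1 k := fun k => by
    rw [t, t, D2_X0, D2_X1, hg0, hg1]
    simp only [t, mul_smul_comm, smul_add, mul_add]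
    rw [mul_comm (pd 0 k q), mul_comm (pd 1 k q), mul_comm (pd 1 k q)]
  rw [finsum_congr hA, finsum_add_distrib hfg0' hfg1, ← finsum_shift g0 hfg0 (by simp [hg0]),
    ← finsum_add_distrib hfg0 hfg1]
  exact (finsum_congr hB).symm

lemma brk0 (p : ℕ) : D1 (D2 (X ((0 : Fin 2), p) : P)) - D2 (D1 (X ((0 : Fin 2), p) : P))
    = -(D1 (X ((0 : Fin 2), p) : P)) := by
  rw [D1_X, D2_X0, Derivation.map_smul, D1_X, D2_X0]
  push_cast
  simp only [MvPolynomial.smul_eq_C_mul, map_add, map_one]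
  ring

lemma brk1 (p : ℕ) : D1 (D2 (X ((1 : Fin 2), p) : P)) - D2 (D1 (X ((1 : Fin 2), p) : P))
    = -(D1 (X ((1 : Fin 2), p) : P)) := by
  rw [D1_X, D2_X1, map_add, Derivation.map_smul, Derivation.map_smul, D1_X, D1_X, D2_X1]
  push_cast
  simp only [MvPolynomial.smul_eq_C_mul, map_add, map_one]
  ring

lemma comm_D (q : P) : D1 (D2 q) - D2 (D1 q) = -(D1 q) := by
  have h : ⁅D1, D2⁆ = -D1 := by
    apply MvPolynomial.derivation_ext
    rintro ⟨a, p⟩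
    rw [Derivation.commutator_apply, Derivation.neg_apply]
    fin_cases a
    · exact brk0 p
    · exact brk1 p
  have := DFunLike.congr_fun h q
  rwa [Derivation.commutator_apply, Derivation.neg_apply] at this

lemma mult_id : D1 (eps⁻¹ ^ 2 • (t 0 0 * t 0 0)) - D2 (eps⁻¹ ^ 2 • (t 0 0 * t 1 0))
    = -(eps⁻¹ ^ 2 • (t 0 0 * t 1 0)) := by
  rw [Derivation.map_smul, Derivation.map_smul, ← smul_sub, ← smul_neg]
  congr 1
  rw [t, t, Derivation.leibniz, Derivation.leibniz, D1_X, D2_X0, D2_X1]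
  simp only [Nat.cast_zero, zero_smul, zero_add, one_smul, smul_zero, smul_eq_mul,
    MvPolynomial.smul_eq_C_mul, map_ofNat]
  ring


/-- The Virasoro commutation relation `[L_{-1}, L_0] = -L_{-1}` as operators on `P`. -/
theorem virasoro_comm_neg_one_zero (q : P) :
    Lneg1 (L0 q) - L0 (Lneg1 q) = -Lneg1 q := by
  rw [LD1 (L0 q), LD2 (Lneg1 q), LD2 q, LD1 q]
  rw [map_add, map_add, D1.leibniz, D2.leibniz]
  simp only [smul_eq_mul]
  linear_combination comm_D q + q * mult_id

end ExtendedToda
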